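/- The triple-well state returns periodically to its initial state: with ψ(t) = exp(-itH)·(1,0,0) for the triple-well Hamiltonian H, the probability |⟨A|ψ(t)⟩|² equals 1 exactly when t = 2kπ for integer k, and |⟨C|ψ(t)⟩|² = 1 exactly when t = (2k+1)π. -/

import Mathlib

open Matrix

/-- The triple-well tunneling Hamiltonian. -/
noncomputable def H : Matrix (Fin 3) (Fin 3) ℂ :=
  !![0, -(1/(Real.sqrt 2 : ℂ)), 0;
     -(1/(Real.sqrt 2 : ℂ)), 0, -(1/(Real.sqrt 2 : ℂ));
     0, -(1/(Real.sqrt 2 : ℂ)), 0]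

/-- The state at time `t`, starting from `|A⟩ = (1,0,0)` (ℏ = 1). -/
noncomputable def ψ (t : ℝ) : Fin 3 → ℂ :=
  (NormedSpace.exp ((-(Complex.I * t)) • H)).mulVec ![1, 0, 0]

noncomputable def Umat : Matrix (Fin 3) (Fin 3) ℂ :=
  !![1/2, 1/(Real.sqrt 2 : ℂ), 1/2;
     -(Real.sqrt 2 : ℂ)/2, 0, (Real.sqrt 2 : ℂ)/2;
     1/2, -(1/(Real.sqrt 2 : ℂ)), 1/2]

noncomputable def Vmat : Matrix (Fin 3) (Fin 3) ℂ :=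
  !![1/2, -(Real.sqrt 2 : ℂ)/2, 1/2;
     1/(Real.sqrt 2 : ℂ), 0, -(1/(Real.sqrt 2 : ℂ));
     1/2, (Real.sqrt 2 : ℂ)/2, 1/2]

lemma hsq : ((Real.sqrt 2 : ℝ) : ℂ) ^ 2 = 2 := by
  norm_cast
  exact Real.sq_sqrt (by norm_num)

lemma hs0 : ((Real.sqrt 2 : ℝ) : ℂ) ≠ 0 := by
  norm_cast
  positivity

lemma hUV : Umat * Vmat = 1 := by
  ext i j
  fin_cases i <;> fin_cases j <;>
    simp [Umat, Vmat, Matrix.mul_apply, Fin.sum_univ_succ] <;>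
    field_simp <;> ring_nf <;> simp [hsq] <;> ring

lemma hVU : Vmat * Umat = 1 := by
  ext i j
  fin_cases i <;> fin_cases j <;>
    simp [Umat, Vmat, Matrix.mul_apply, Fin.sum_univ_succ] <;>
    field_simp <;> ring_nf <;> simp [hsq] <;> ring

lemma diag3 (a b c : ℂ) :
    Matrix.diagonal ![a, b, c] = !![a, 0, 0; 0, b, 0; 0, 0, c] := by
  ext i j
  fin_cases i <;> fin_cases j <;> simp [Matrix.diagonal_apply, Matrix.vecHead, Matrix.vecTail]

noncomputable def uU : (Matrix (Fin 3) (Fin 3) ℂ)ˣ := ⟨Umat, Vmat, hUV, hVU⟩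

set_option maxHeartbeats 1600000 in
lemma hA (t : ℝ) :
    (-(Complex.I * t)) • H =
      Umat * Matrix.diagonal ![-(Complex.I * t), 0, Complex.I * t] * Vmat := by
  rw [diag3]
  ext i j
  fin_cases i <;> fin_cases j <;>
    simp [Umat, Vmat, H, Matrix.mul_apply, Matrix.diagonal_apply, Fin.sum_univ_succ] <;>
    field_simp <;> ring_nf <;> simp [hsq] <;> ring

lemma exp_eq (t : ℝ) :
    NormedSpace.exp ((-(Complex.I * t)) • H) =
      Umat * Matrix.diagonal ![Complex.exp (-(Complex.I * t)), 1,
        Complex.exp (Complex.I * t)] * Vmat := by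
  rw [hA t]
  have := Matrix.exp_units_conj uU (Matrix.diagonal ![-(Complex.I * t), 0, Complex.I * t])
  have hcoe : (↑uU : Matrix (Fin 3) (Fin 3) ℂ) = Umat := rfl
  have hcoe' : (↑uU⁻¹ : Matrix (Fin 3) (Fin 3) ℂ) = Vmat := rfl
  rw [hcoe, hcoe'] at this
  rw [this, Matrix.exp_diagonal, Pi.exp_def]
  have h2 : (fun i => NormedSpace.exp (![-(Complex.I * (t:ℂ)), 0, Complex.I * t] i)) =
      ![Complex.exp (-(Complex.I * t)), 1, Complex.exp (Complex.I * t)] := by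
    funext i
    fin_cases i <;> simp [← Complex.exp_eq_exp_ℂ]
  rw [h2]

lemma psi_vals (t : ℝ) :
    ψ t 0 = (((1 + Real.cos t) / 2 : ℝ) : ℂ) ∧
    ψ t 2 = (((Real.cos t - 1) / 2 : ℝ) : ℂ) := by
  have he1 : Complex.exp (Complex.I * t) = Complex.cos t + Complex.sin t * Complex.I := by
    rw [mul_comm, Complex.exp_mul_I]
  have he2 : Complex.exp (-(Complex.I * t)) = Complex.cos t - Complex.sin t * Complex.I := by
    have : -(Complex.I * (t : ℂ)) = ((-t : ℝ) : ℂ) * Complex.I := by push_cast; ring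
    rw [this, Complex.exp_mul_I]
    push_cast
    simp [Complex.cos_neg, Complex.sin_neg]
    ring
  constructor <;>
  · simp only [ψ, exp_eq, Matrix.mulVec, dotProduct, Matrix.mul_apply,
      Fin.sum_univ_succ, diag3, Umat, Vmat, he1, he2]
    simp [Matrix.vecHead, Matrix.vecTail]
    field_simp
    ring_nf
    simp [hsq, Complex.ext_iff]
    ring_nf

/-- Periodic return of the triple-well state: `|⟨A|ψ(t)⟩|² = 1` exactly when `t = 2kπ`,
and `|⟨C|ψ(t)⟩|² = 1` exactly when `t = (2k+1)π`, for integer `k`. -/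
theorem stmt4 (t : ℝ) :
    (‖ψ t 0‖ ^ 2 = 1 ↔ ∃ k : ℤ, t = 2 * k * Real.pi) ∧
    (‖ψ t 2‖ ^ 2 = 1 ↔ ∃ k : ℤ, t = (2 * k + 1) * Real.pi) := by
  obtain ⟨h0, h2⟩ := psi_vals t
  have hle := Real.cos_le_one t
  have hge := Real.neg_one_le_cos t
  constructor
  · rw [h0, Complex.norm_real, Real.norm_eq_abs, sq_abs]
    constructor
    · intro h
      have hfac : (1 - Real.cos t) * (3 + Real.cos t) = 0 := by nlinarith
      have hc : Real.cos t = 1 := by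
        rcases mul_eq_zero.mp hfac with h' | h'
        · linarith
        · linarith
      obtain ⟨n, hn⟩ := (Real.cos_eq_one_iff t).mp hc
      exact ⟨n, by push_cast at hn ⊢; linarith⟩
    · rintro ⟨k, rfl⟩
      have : Real.cos (2 * (k : ℝ) * Real.pi) = 1 := by
        have := Real.cos_int_mul_two_pi k
        rw [show (k : ℝ) * (2 * Real.pi) = 2 * (k : ℝ) * Real.pi by ring] at this
        exact this
      rw [this]; norm_num
  · rw [h2, Complex.norm_real, Real.norm_eq_abs, sq_abs]
    constructor
    · intro h
      have hfac : (1 + Real.cos t) * (Real.cos t - 3) = 0 := by nlinarith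
      have hc : Real.cos t = -1 := by
        rcases mul_eq_zero.mp hfac with h' | h'
        · linarith
        · linarith
      have hc' : Real.cos (t - Real.pi) = 1 := by
        rw [Real.cos_sub]
        simp [hc]
      obtain ⟨n, hn⟩ := (Real.cos_eq_one_iff _).mp hc'
      exact ⟨n, by push_cast at hn ⊢; linarith⟩
    · rintro ⟨k, rfl⟩
      have : Real.cos ((2 * (k : ℝ) + 1) * Real.pi) = -1 := by
        have := Real.cos_int_mul_two_pi_add_pi k
        rw [show (k : ℝ) * (2 * Real.pi) + Real.pi = (2 * (k : ℝ) + 1) * Real.pi by ring] at this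
        exact this
      rw [this]; norm_num
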